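/- Let r > 0, λ ∈ ℝ with λ ≠ 0, and let v : B_r(0) → ℝ³ be differentiable, not identically zero, and satisfy for every x ∈ B_r(0) and every μ ∈ {1,2,3}: 2λ v_μ(x) = c_μ(x) · (curl v)(0) − v(0) · (curl c_μ)(x). Then λ = √5 E/(3ℓ) or λ = −√5 E/(3ℓ), and (curl v)(0) = (3λ/E) v(0), i.e. (curl v)(0) = ±(√5/ℓ) v(0) according to the sign of λ. -/

import Mathlib

/-- The partial derivative `∂ w_i / ∂ x_j` of a vector field `w` on `ℝ³`. -/
noncomputable def pderiv3 (w : EuclideanSpace ℝ (Fin 3) → EuclideanSpace ℝ (Fin 3))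
    (j i : Fin 3) (x : EuclideanSpace ℝ (Fin 3)) : ℝ :=
  fderiv ℝ (fun y => w y i) x (EuclideanSpace.single j (1 : ℝ))

/-- The usual curl of a vector field on `ℝ³`. -/
noncomputable def curl3 (w : EuclideanSpace ℝ (Fin 3) → EuclideanSpace ℝ (Fin 3))
    (x : EuclideanSpace ℝ (Fin 3)) : EuclideanSpace ℝ (Fin 3) :=
  (WithLp.equiv 2 (Fin 3 → ℝ)).symm
    ![pderiv3 w 1 2 x - pderiv3 w 2 1 x,
      pderiv3 w 2 0 x - pderiv3 w 0 2 x,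
      pderiv3 w 0 1 x - pderiv3 w 1 0 x]

/-- For a matrix field `C`, the vector field `c_μ` with components `(c_μ(x))_ν = C_{μν}(x)`. -/
noncomputable def cvec (C : EuclideanSpace ℝ (Fin 3) → Matrix (Fin 3) (Fin 3) ℝ)
    (μ : Fin 3) (x : EuclideanSpace ℝ (Fin 3)) : EuclideanSpace ℝ (Fin 3) :=
  (WithLp.equiv 2 (Fin 3 → ℝ)).symm (fun ν => C x μ ν)

set_option maxHeartbeats 1000000

open Real Filter Asymptotics

noncomputable abbrev E3' := EuclideanSpace ℝ (Fin 3)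

def dd (i j : Fin 3) : ℝ := if i = j then 1 else 0

lemma dd_abs (i j : Fin 3) : |dd i j| ≤ 1 := by unfold dd; split_ifs <;> simp

lemma coord_le_norm (x : E3') (i : Fin 3) : |x i| ≤ ‖x‖ := by
  have h := abs_real_inner_le_norm x (EuclideanSpace.single i 1)
  simpa [EuclideanSpace.inner_single_right, real_inner_comm] using h

noncomputable def Af (E : ℝ) (f : ℝ → ℝ) : ℝ → ℝ :=
  fun s => 2*E/3 * f s + E/3 * s * deriv f s

noncomputable def kf (l : ℝ) (f : ℝ → ℝ) : ℝ → ℝ :=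
  fun s => if s = 0 then -1/l^2 else deriv f s / s

noncomputable def Cfun (E l : ℝ) (f : ℝ → ℝ) (μ β : Fin 3) : E3' → ℝ :=
  fun y => Af E f ‖y‖ * dd μ β - E / 3 * (kf l f ‖y‖ * (y μ * y β))

noncomputable def MM (E l : ℝ) (σ μ β : Fin 3) : E3' →L[ℝ] ℝ :=
  ((-4*E/(3*l^2)) * dd μ β) • EuclideanSpace.proj (𝕜 := ℝ) σ
    + ((E/(3*l^2)) * dd σ μ) • EuclideanSpace.proj (𝕜 := ℝ) β
    + ((E/(3*l^2)) * dd σ β) • EuclideanSpace.proj (𝕜 := ℝ) μ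

lemma proj_single (a j : Fin 3) :
    (EuclideanSpace.proj (𝕜 := ℝ) a) (EuclideanSpace.single j (1:ℝ)) = dd j a := by
  simp [EuclideanSpace.single_apply, dd, eq_comm]

lemma MM_apply (E l : ℝ) (σ μ β j : Fin 3) :
    MM E l σ μ β (EuclideanSpace.single j 1)
      = (-4*E/(3*l^2)) * dd μ β * dd j σ + (E/(3*l^2)) * dd σ μ * dd j β
        + (E/(3*l^2)) * dd σ β * dd j μ := by
  unfold MM
  rw [ContinuousLinearMap.add_apply, ContinuousLinearMap.add_apply,
    ContinuousLinearMap.smul_apply, ContinuousLinearMap.smul_apply,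
    ContinuousLinearMap.smul_apply, proj_single, proj_single, proj_single]
  simp only [smul_eq_mul]
  try ring

lemma hasFDerivAt_norm' {x : E3'} (hx : x ≠ 0) :
    HasFDerivAt (fun y : E3' => ‖y‖) (‖x‖⁻¹ • innerSL ℝ x) x := by
  have h1 : HasFDerivAt (fun y : E3' => ‖y‖ ^ 2) (2 • (innerSL ℝ x)) x :=
    (hasStrictFDerivAt_norm_sq x).hasFDerivAt
  have h2 : HasDerivAt Real.sqrt (1 / (2 * Real.sqrt (‖x‖ ^ 2))) (‖x‖ ^ 2) :=
    Real.hasDerivAt_sqrt (by have := norm_pos_iff.2 hx; positivity)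
  have h3 := h2.comp_hasFDerivAt x h1
  have hs : Real.sqrt (‖x‖ ^ 2) = ‖x‖ := Real.sqrt_sq (norm_nonneg x)
  have heq : (fun y : E3' => Real.sqrt (‖y‖ ^ 2)) = fun y : E3' => ‖y‖ := by
    funext y; exact Real.sqrt_sq (norm_nonneg y)
  have h4 : HasFDerivAt (fun y : E3' => ‖y‖)
      ((1 / (2 * Real.sqrt (‖x‖ ^ 2))) • 2 • (innerSL ℝ x)) x := by
    rw [← heq]; exact h3
  have hn : ‖x‖ ≠ 0 := norm_ne_zero_iff.2 hx
  have h5 : (‖x‖⁻¹ • innerSL ℝ x) = ((1 / (2 * Real.sqrt (‖x‖ ^ 2))) • 2 • (innerSL ℝ x)) := by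
    ext h
    simp only [ContinuousLinearMap.smul_apply, hs, smul_eq_mul, nsmul_eq_mul]
    field_simp
    norm_num
  rw [h5]; exact h4

lemma littleo_helper (φ : ℝ → ℝ) (hφ : Tendsto φ (nhdsWithin 0 {(0:ℝ)}ᶜ) (nhds 0))
    (T : E3' → ℝ) (hT0 : T 0 = 0) (hb : ∀ x : E3', x ≠ 0 → |T x| ≤ φ ‖x‖ * ‖x‖) :
    (fun x : E3' => T x) =o[nhds 0] (fun x : E3' => x) := by
  rw [Asymptotics.isLittleO_iff]
  intro c hc
  have h1 : ∀ᶠ s in nhdsWithin 0 {(0:ℝ)}ᶜ, φ s ≤ c := by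
    filter_upwards [hφ (Metric.closedBall_mem_nhds 0 hc)] with s hs
    exact (abs_le.mp (by simpa [Real.dist_eq] using hs)).2
  rw [eventually_nhdsWithin_iff, Metric.eventually_nhds_iff] at h1
  obtain ⟨ε, hε, hball⟩ := h1
  rw [Metric.eventually_nhds_iff]
  refine ⟨ε, hε, fun {y} hy => ?_⟩
  by_cases hy0 : y = 0
  · simp [hy0, hT0]
  · have hn : ‖y‖ ≠ 0 := norm_ne_zero_iff.2 hy0
    have hd : dist ‖y‖ (0:ℝ) < ε := by
      simp only [Real.dist_eq, sub_zero, abs_norm]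
      simpa [dist_zero_right] using hy
    have hφc := hball hd hn
    calc ‖T y‖ = |T y| := rfl
    _ ≤ φ ‖y‖ * ‖y‖ := hb y hy0
    _ ≤ c * ‖y‖ := mul_le_mul_of_nonneg_right hφc (norm_nonneg y)

section OneVar

variable (E l : ℝ) (f : ℝ → ℝ)

lemma hd1 (hf : ContDiff ℝ 3 f) : ∀ t, HasDerivAt f (deriv f t) t := fun t =>
  ((hf.differentiable (by norm_num)) t).hasDerivAt

lemma hdf2 (hf : ContDiff ℝ 3 f) : Differentiable ℝ (deriv f) := by
  have h3 : ContDiff ℝ (2+1) f := by exact_mod_cast hf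
  have := (contDiff_succ_iff_deriv (n := 2)).mp h3
  exact this.2.2.differentiable (by norm_num)

lemma hd2 (hf : ContDiff ℝ 3 f) : ∀ t, HasDerivAt (deriv f) (deriv (deriv f) t) t := fun t =>
  ((hdf2 f hf) t).hasDerivAt

lemma hcont2 (hf : ContDiff ℝ 3 f) : Continuous (deriv (deriv f)) := by
  have h3 : ContDiff ℝ (2+1) f := by exact_mod_cast hf
  have h1 := (contDiff_succ_iff_deriv (n := 2)).mp h3
  exact h1.2.2.continuous_deriv (by norm_num)

lemma hf'0 (hf : ContDiff ℝ 3 f) (hfeven : ∀ s, f (-s) = f s) : deriv f 0 = 0 := by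
  have h1 : HasDerivAt (fun s => f (-s)) (deriv f (-(0:ℝ)) * (-1)) 0 :=
    (hd1 f hf (-(0:ℝ))).comp 0 (hasDerivAt_neg 0)
  have h2 : (fun s => f (-s)) = f := funext hfeven
  rw [h2] at h1
  have h3 := h1.deriv
  simp at h3
  linarith [h3]

lemma kf_slope_tendsto (hf : ContDiff ℝ 3 f) (hfeven : ∀ s, f (-s) = f s) :
    Tendsto (fun s => deriv f s / s) (nhdsWithin 0 {(0:ℝ)}ᶜ)
      (nhds (deriv (deriv f) 0)) := by
  have h := hasDerivAt_iff_tendsto_slope.mp (hd2 f hf 0)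
  refine h.congr' ?_
  filter_upwards [eventually_mem_nhdsWithin] with s hs
  have hs0 : s ≠ 0 := hs
  simp [slope, hf'0 f hf hfeven, sub_zero]
  ring

lemma kf_hasDerivAt (hf : ContDiff ℝ 3 f) {s : ℝ} (hs : s ≠ 0) :
    HasDerivAt (kf l f) ((deriv (deriv f) s * s - deriv f s) / s^2) s := by
  have h : HasDerivAt (fun t => deriv f t / t) ((deriv (deriv f) s * s - deriv f s * 1) / s^2) s :=
    (hd2 f hf s).div (hasDerivAt_id s) hs
  refine (h.congr_of_eventuallyEq ?_).congr_deriv (by ring)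
  filter_upwards [isOpen_ne.mem_nhds hs] with t ht
  simp [kf, ht]

lemma Af_hasDerivAt (hf : ContDiff ℝ 3 f) (t : ℝ) :
    HasDerivAt (Af E f) (E * deriv f t + E/3 * t * deriv (deriv f) t) t := by
  have h1 := ((hd1 f hf t).const_mul (2*E/3)).add
    (((hasDerivAt_id t).mul (hd2 f hf t)).const_mul (E/3))
  refine (h1.congr_deriv (by simp; ring)).congr_of_eventuallyEq ?_
  filter_upwards with t
  simp [Af]; ring

lemma tends1 (hf : ContDiff ℝ 3 f) (hfeven : ∀ s, f (-s) = f s)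
    (hf'' : deriv (deriv f) 0 = -1 / l ^ 2) :
    Tendsto (fun s => (E * deriv f s + E/3 * s * deriv (deriv f) s) * s⁻¹)
      (nhdsWithin 0 {(0:ℝ)}ᶜ) (nhds (-4*E/(3*l^2))) := by
  have h1 : Tendsto (fun s => E * (deriv f s / s) + E/3 * deriv (deriv f) s)
      (nhdsWithin 0 {(0:ℝ)}ᶜ) (nhds (E * (-1/l^2) + E/3 * (-1/l^2))) := by
    refine Tendsto.add (Tendsto.const_mul E ?_) (Tendsto.const_mul (E/3) ?_)
    · have := kf_slope_tendsto f hf hfeven; rwa [hf''] at this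
    · have := ((hcont2 f hf).tendsto 0).mono_left (nhdsWithin_le_nhds (s := {(0:ℝ)}ᶜ))
      rwa [hf''] at this
  have h2 : E * (-1/l^2) + E/3 * (-1/l^2) = -4*E/(3*l^2) := by ring
  rw [h2] at h1
  refine h1.congr' ?_
  filter_upwards [eventually_mem_nhdsWithin] with s hs
  have hs0 : (s:ℝ) ≠ 0 := hs
  field_simp

lemma tends2 (hf : ContDiff ℝ 3 f) (hfeven : ∀ s, f (-s) = f s)
    (hf'' : deriv (deriv f) 0 = -1 / l ^ 2) :
    Tendsto (fun s => ((deriv (deriv f) s * s - deriv f s) / s^2) * s)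
      (nhdsWithin 0 {(0:ℝ)}ᶜ) (nhds 0) := by
  have h1 : Tendsto (fun s => deriv (deriv f) s - deriv f s / s)
      (nhdsWithin 0 {(0:ℝ)}ᶜ) (nhds ((-1/l^2) - (-1/l^2))) := by
    refine Tendsto.sub ?_ ?_
    · have := ((hcont2 f hf).tendsto 0).mono_left (nhdsWithin_le_nhds (s := {(0:ℝ)}ᶜ))
      rwa [hf''] at this
    · have := kf_slope_tendsto f hf hfeven; rwa [hf''] at this
  have h2 : (-1/l^2) - (-1/l^2) = (0:ℝ) := by ring
  rw [h2] at h1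
  refine h1.congr' ?_
  filter_upwards [eventually_mem_nhdsWithin] with s hs
  have hs0 : (s:ℝ) ≠ 0 := hs
  field_simp

lemma tends3 (hf : ContDiff ℝ 3 f) (hfeven : ∀ s, f (-s) = f s)
    (hf'' : deriv (deriv f) 0 = -1 / l ^ 2) :
    Tendsto (fun s => kf l f s - kf l f 0) (nhdsWithin 0 {(0:ℝ)}ᶜ) (nhds 0) := by
  have hk : Tendsto (kf l f) (nhdsWithin 0 {(0:ℝ)}ᶜ) (nhds (-1/l^2)) := by
    have h := kf_slope_tendsto f hf hfeven
    rw [hf''] at h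
    refine h.congr' ?_
    filter_upwards [eventually_mem_nhdsWithin] with s hs
    have hs0 : (s:ℝ) ≠ 0 := hs
    simp [kf, hs0]
  have hk0 : kf l f 0 = -1/l^2 := by simp [kf]
  have h2 := hk.sub_const (-1/l^2)
  rw [hk0]
  simpa using h2

lemma tends0 (hf : ContDiff ℝ 3 f) (hfeven : ∀ s, f (-s) = f s) :
    Tendsto (fun s => (Af E f s - Af E f 0) * s⁻¹) (nhdsWithin 0 {(0:ℝ)}ᶜ) (nhds 0) := by
  have hA : HasDerivAt (Af E f) (E * deriv f 0 + E/3 * 0 * deriv (deriv f) 0) 0 :=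
    Af_hasDerivAt E f hf 0
  have h0 : E * deriv f 0 + E/3 * 0 * deriv (deriv f) 0 = 0 := by
    rw [hf'0 f hf hfeven]; ring
  rw [h0] at hA
  have h := hasDerivAt_iff_tendsto_slope.mp hA
  refine h.congr' ?_
  filter_upwards [eventually_mem_nhdsWithin] with s hs
  have hs0 : (s:ℝ) ≠ 0 := hs
  simp [slope, sub_zero, div_eq_mul_inv]
  ring

end OneVar

lemma Cfun_hasFDerivAt (E l : ℝ) (f : ℝ → ℝ) (hf : ContDiff ℝ 3 f) (μ β : Fin 3)
    {x : E3'} (hx : x ≠ 0) :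
    HasFDerivAt (Cfun E l f μ β)
      ((dd μ β) • ((E * deriv f ‖x‖ + E/3 * ‖x‖ * deriv (deriv f) ‖x‖) • (‖x‖⁻¹ • innerSL ℝ x))
        - (E/3) • (kf l f ‖x‖ • (x μ • (EuclideanSpace.proj (𝕜 := ℝ) β)
              + x β • (EuclideanSpace.proj (𝕜 := ℝ) μ))
            + (x μ * x β) • (((deriv (deriv f) ‖x‖ * ‖x‖ - deriv f ‖x‖) / ‖x‖^2)
                • (‖x‖⁻¹ • innerSL ℝ x)))) x := by
  have hn := hasFDerivAt_norm' hx
  have hs : ‖x‖ ≠ 0 := norm_ne_zero_iff.2 hx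
  have hA := (Af_hasDerivAt E f hf ‖x‖).comp_hasFDerivAt x hn
  have hk := (kf_hasDerivAt l f hf hs).comp_hasFDerivAt x hn
  have hμ : HasFDerivAt (𝕜 := ℝ) (fun y : E3' => y μ) (EuclideanSpace.proj (𝕜 := ℝ) μ) x :=
    (EuclideanSpace.proj (𝕜 := ℝ) μ).hasFDerivAt
  have hβ : HasFDerivAt (𝕜 := ℝ) (fun y : E3' => y β) (EuclideanSpace.proj (𝕜 := ℝ) β) x :=
    (EuclideanSpace.proj (𝕜 := ℝ) β).hasFDerivAt
  have hprod := hμ.mul hβ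
  have hkp := hk.mul hprod
  have h7 := hkp.const_mul (E/3)
  have h8 := hA.mul_const (dd μ β)
  exact h8.sub h7

lemma Cfun_fderiv_apply (E l : ℝ) (f : ℝ → ℝ) (hf : ContDiff ℝ 3 f) (μ β σ : Fin 3)
    {x : E3'} (hx : x ≠ 0) :
    fderiv ℝ (Cfun E l f μ β) x (EuclideanSpace.single σ 1)
      = (E * deriv f ‖x‖ + E/3 * ‖x‖ * deriv (deriv f) ‖x‖) * (‖x‖⁻¹ * x σ) * dd μ β
        - E/3 * (((deriv (deriv f) ‖x‖ * ‖x‖ - deriv f ‖x‖) / ‖x‖^2) * (‖x‖⁻¹ * x σ)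
              * (x μ * x β)
            + kf l f ‖x‖ * (dd σ μ * x β + x μ * dd σ β)) := by
  rw [(Cfun_hasFDerivAt E l f hf μ β hx).fderiv]
  simp [dd, EuclideanSpace.inner_single_right, EuclideanSpace.single_apply, eq_comm,
    real_inner_comm]
  split_ifs <;> simp [EuclideanSpace.inner_single_right, real_inner_comm] <;>
    (try ring) <;> tauto

lemma Cfun_hasFDerivAt_zero (E l : ℝ) (hE : 0 < E) (f : ℝ → ℝ) (hf : ContDiff ℝ 3 f)
    (hfeven : ∀ s, f (-s) = f s) (hf'' : deriv (deriv f) 0 = -1 / l ^ 2) (μ β : Fin 3) :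
    HasFDerivAt (Cfun E l f μ β) (0 : E3' →L[ℝ] ℝ) 0 := by
  rw [hasFDerivAt_iff_isLittleO_nhds_zero]
  have h := littleo_helper
    (fun s => |(Af E f s - Af E f 0) * s⁻¹| + E/3 * |kf l f s * s|)
    (by
      have h1 := (tends0 E f hf hfeven).abs
      have hid : Tendsto (fun s : ℝ => s) (nhdsWithin 0 {(0:ℝ)}ᶜ) (nhds 0) :=
        tendsto_id.mono_left nhdsWithin_le_nhds
      have hk2 : Tendsto (fun s => kf l f s * s) (nhdsWithin 0 {(0:ℝ)}ᶜ) (nhds 0) := by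
        have := ((tends3 l f hf hfeven hf'').add_const (kf l f 0)).mul hid
        simpa using this
      have h3 := h1.add ((hk2.abs).const_mul (E/3))
      simpa using h3)
    (fun x : E3' => Cfun E l f μ β x - Cfun E l f μ β 0)
    (by simp)
    (by
      intro x hx
      beta_reduce
      have hs : (0:ℝ) < ‖x‖ := norm_pos_iff.2 hx
      have hs0 : ‖x‖ ≠ 0 := ne_of_gt hs
      have hxμ := coord_le_norm x μ
      have hxβ := coord_le_norm x β
      have hdd := dd_abs μ β
      have e1 : Cfun E l f μ β x - Cfun E l f μ β 0
          = (Af E f ‖x‖ - Af E f 0) * dd μ β - E/3 * (kf l f ‖x‖ * (x μ * x β)) := by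
        simp [Cfun]
        ring
      rw [e1]
      have b1 : |(Af E f ‖x‖ - Af E f 0) * dd μ β| ≤ |(Af E f ‖x‖ - Af E f 0) * ‖x‖⁻¹| * ‖x‖ := by
        rw [abs_mul, abs_mul, abs_inv, abs_norm]
        have hh : |Af E f ‖x‖ - Af E f 0| * ‖x‖⁻¹ * ‖x‖ = |Af E f ‖x‖ - Af E f 0| := by
          field_simp
        rw [hh]
        exact mul_le_of_le_one_right (abs_nonneg _) hdd
      have b2 : |E/3 * (kf l f ‖x‖ * (x μ * x β))| ≤ E/3 * |kf l f ‖x‖ * ‖x‖| * ‖x‖ := by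
        rw [abs_mul, abs_mul, abs_mul, abs_mul, abs_norm]
        have hE3 : |E/3| = E/3 := abs_of_pos (by linarith)
        rw [hE3]
        have hmm : |x μ| * |x β| ≤ ‖x‖ * ‖x‖ :=
          mul_le_mul hxμ hxβ (abs_nonneg _) (norm_nonneg _)
        nlinarith [abs_nonneg (kf l f ‖x‖), abs_nonneg (x μ), abs_nonneg (x β),
          mul_le_mul_of_nonneg_left hmm (abs_nonneg (kf l f ‖x‖))]
      calc |(Af E f ‖x‖ - Af E f 0) * dd μ β - E/3 * (kf l f ‖x‖ * (x μ * x β))|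
          ≤ |(Af E f ‖x‖ - Af E f 0) * dd μ β| + |E/3 * (kf l f ‖x‖ * (x μ * x β))| :=
            abs_sub _ _
        _ ≤ (|(Af E f ‖x‖ - Af E f 0) * ‖x‖⁻¹| + E/3 * |kf l f ‖x‖ * ‖x‖|) * ‖x‖ := by
            rw [add_mul]; exact add_le_add b1 b2)
  simpa using h

lemma G_hasFDerivAt_zero (E l : ℝ) (hE : 0 < E) (f : ℝ → ℝ)
    (hf : ContDiff ℝ 3 f) (hfeven : ∀ s, f (-s) = f s)
    (hf'' : deriv (deriv f) 0 = -1 / l ^ 2) (μ β σ : Fin 3) :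
    HasFDerivAt (fun x : E3' => fderiv ℝ (Cfun E l f μ β) x (EuclideanSpace.single σ 1))
      (MM E l σ μ β) 0 := by
  have hG0 : fderiv ℝ (Cfun E l f μ β) 0 = 0 :=
    (Cfun_hasFDerivAt_zero E l hE f hf hfeven hf'' μ β).fderiv
  have hkf0 : kf l f 0 = -1/l^2 := by simp [kf]
  have hMx : ∀ x : E3', MM E l σ μ β x = (-4*E/(3*l^2)) * dd μ β * x σ
      + (E/(3*l^2)) * dd σ μ * x β + (E/(3*l^2)) * dd σ β * x μ := by
    intro x
    unfold MM
    simp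
    try ring
  rw [hasFDerivAt_iff_isLittleO_nhds_zero]
  have key := littleo_helper
    (fun s => |(E * deriv f s + E/3 * s * deriv (deriv f) s) * s⁻¹ - (-4*E/(3*l^2))|
      + E/3 * |((deriv (deriv f) s * s - deriv f s) / s^2) * s|
      + 2*E/3 * |kf l f s - kf l f 0|)
    (by
      have h1 := ((tends1 E l f hf hfeven hf'').sub_const (-4*E/(3*l^2))).abs
      have h2 := ((tends2 l f hf hfeven hf'').abs).const_mul (E/3)
      have h3 := ((tends3 l f hf hfeven hf'').abs).const_mul (2*E/3)
      have h4 := (h1.add h2).add h3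
      simpa using h4)
    (fun x : E3' => fderiv ℝ (Cfun E l f μ β) x (EuclideanSpace.single σ 1)
      - fderiv ℝ (Cfun E l f μ β) 0 (EuclideanSpace.single σ 1) - MM E l σ μ β x)
    (by simp [hG0])
    (by
      intro x hx
      beta_reduce
      have hs : (0:ℝ) < ‖x‖ := norm_pos_iff.2 hx
      have hs0 : ‖x‖ ≠ 0 := ne_of_gt hs
      have hxμ := coord_le_norm x μ
      have hxβ := coord_le_norm x β
      have hxσ := coord_le_norm x σ
      have e1 : fderiv ℝ (Cfun E l f μ β) x (EuclideanSpace.single σ 1)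
          - fderiv ℝ (Cfun E l f μ β) 0 (EuclideanSpace.single σ 1) - MM E l σ μ β x
          = (((E * deriv f ‖x‖ + E/3 * ‖x‖ * deriv (deriv f) ‖x‖) * ‖x‖⁻¹ - (-4*E/(3*l^2)))
                * x σ * dd μ β)
            + (-(E/3) * (((deriv (deriv f) ‖x‖ * ‖x‖ - deriv f ‖x‖) / ‖x‖^2) * ‖x‖⁻¹)
                * (x σ * x μ * x β))
            + (-(E/3) * (kf l f ‖x‖ - kf l f 0) * (dd σ μ * x β + x μ * dd σ β)) := by
        rw [Cfun_fderiv_apply E l f hf μ β σ hx, hG0, hMx x, hkf0]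
        simp only [ContinuousLinearMap.zero_apply]
        ring
      rw [e1]
      have hinv : ‖x‖⁻¹ * |x σ| ≤ 1 := by
        rw [← div_eq_inv_mul]
        exact div_le_one_of_le₀ hxσ (le_of_lt hs)
      have b1 : |((E * deriv f ‖x‖ + E/3 * ‖x‖ * deriv (deriv f) ‖x‖) * ‖x‖⁻¹ - (-4*E/(3*l^2)))
            * x σ * dd μ β|
          ≤ |(E * deriv f ‖x‖ + E/3 * ‖x‖ * deriv (deriv f) ‖x‖) * ‖x‖⁻¹ - (-4*E/(3*l^2))|
            * ‖x‖ := by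
        rw [abs_mul, abs_mul, mul_assoc]
        refine mul_le_mul_of_nonneg_left ?_ (abs_nonneg _)
        nlinarith [dd_abs μ β, abs_nonneg (x σ), abs_nonneg (dd μ β)]
      have b2 : |(-(E/3) * (((deriv (deriv f) ‖x‖ * ‖x‖ - deriv f ‖x‖) / ‖x‖^2) * ‖x‖⁻¹)
            * (x σ * x μ * x β))|
          ≤ E/3 * |((deriv (deriv f) ‖x‖ * ‖x‖ - deriv f ‖x‖) / ‖x‖^2) * ‖x‖| * ‖x‖ := by
        rw [abs_mul, abs_mul, abs_mul, abs_mul, abs_mul, abs_inv, abs_norm, abs_mul, abs_norm]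
        have hE3 : |(-(E/3))| = E/3 := by rw [abs_neg]; exact abs_of_pos (by linarith)
        rw [hE3]
        have h2 : ‖x‖⁻¹ * |x σ| * (|x μ| * |x β|) ≤ ‖x‖ * ‖x‖ := by
          have := mul_le_mul hinv (mul_le_mul hxμ hxβ (abs_nonneg _) (le_of_lt hs))
            (by positivity) zero_le_one
          simpa using this
        nlinarith [abs_nonneg ((deriv (deriv f) ‖x‖ * ‖x‖ - deriv f ‖x‖) / ‖x‖^2), h2,
          mul_le_mul_of_nonneg_left h2
            (abs_nonneg ((deriv (deriv f) ‖x‖ * ‖x‖ - deriv f ‖x‖) / ‖x‖^2))]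
      have b3 : |(-(E/3) * (kf l f ‖x‖ - kf l f 0) * (dd σ μ * x β + x μ * dd σ β))|
          ≤ 2*E/3 * |kf l f ‖x‖ - kf l f 0| * ‖x‖ := by
        rw [abs_mul, abs_mul]
        have hE3 : |(-(E/3))| = E/3 := by rw [abs_neg]; exact abs_of_pos (by linarith)
        rw [hE3]
        have h3 : |dd σ μ * x β + x μ * dd σ β| ≤ 2 * ‖x‖ := by
          calc |dd σ μ * x β + x μ * dd σ β| ≤ |dd σ μ * x β| + |x μ * dd σ β| := abs_add_le _ _
          _ ≤ 2 * ‖x‖ := by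
              rw [abs_mul, abs_mul]
              nlinarith [dd_abs σ μ, dd_abs σ β, abs_nonneg (x β), abs_nonneg (x μ),
                abs_nonneg (dd σ μ), abs_nonneg (dd σ β)]
        nlinarith [abs_nonneg (kf l f ‖x‖ - kf l f 0),
          mul_le_mul_of_nonneg_left h3 (abs_nonneg (kf l f ‖x‖ - kf l f 0))]
      calc |(((E * deriv f ‖x‖ + E/3 * ‖x‖ * deriv (deriv f) ‖x‖) * ‖x‖⁻¹ - (-4*E/(3*l^2)))
                * x σ * dd μ β)
            + (-(E/3) * (((deriv (deriv f) ‖x‖ * ‖x‖ - deriv f ‖x‖) / ‖x‖^2) * ‖x‖⁻¹)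
                * (x σ * x μ * x β))
            + (-(E/3) * (kf l f ‖x‖ - kf l f 0) * (dd σ μ * x β + x μ * dd σ β))|
          ≤ |(((E * deriv f ‖x‖ + E/3 * ‖x‖ * deriv (deriv f) ‖x‖) * ‖x‖⁻¹ - (-4*E/(3*l^2)))
                * x σ * dd μ β)|
            + |(-(E/3) * (((deriv (deriv f) ‖x‖ * ‖x‖ - deriv f ‖x‖) / ‖x‖^2) * ‖x‖⁻¹)
                * (x σ * x μ * x β))|
            + |(-(E/3) * (kf l f ‖x‖ - kf l f 0) * (dd σ μ * x β + x μ * dd σ β))| :=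
            abs_add_three _ _ _
        _ ≤ (|(E * deriv f ‖x‖ + E/3 * ‖x‖ * deriv (deriv f) ‖x‖) * ‖x‖⁻¹ - (-4*E/(3*l^2))|
              + E/3 * |((deriv (deriv f) ‖x‖ * ‖x‖ - deriv f ‖x‖) / ‖x‖^2) * ‖x‖|
              + 2*E/3 * |kf l f ‖x‖ - kf l f 0|) * ‖x‖ := by
            linarith [b1, b2, b3])
  simp only [zero_add]
  simpa [hG0] using key



/-- Let `E, ℓ > 0`, `f` even, `C³`, `f(0) = 1`, `f''(0) = −1/ℓ²`, and `C` the matrix field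
of the isotropic incompressible covariance. If `r > 0`, `λ ≠ 0`, and `v : B_r(0) → ℝ³` is
differentiable, not identically zero, and satisfies
`2λ v_μ(x) = c_μ(x)·(curl v)(0) − v(0)·(curl c_μ)(x)` on `B_r(0)`, then
`λ = ±√5 E/(3ℓ)` and `(curl v)(0) = (3λ/E) v(0)`. -/
theorem stmt_17 (E l : ℝ) (hE : 0 < E) (hl : 0 < l)
    (f : ℝ → ℝ) (hf : ContDiff ℝ 3 f) (hfeven : ∀ s, f (-s) = f s)
    (hf0 : f 0 = 1) (hf'' : deriv (deriv f) 0 = -1 / l ^ 2)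
    (C : EuclideanSpace ℝ (Fin 3) → Matrix (Fin 3) (Fin 3) ℝ)
    (hC0 : ∀ μ ν : Fin 3, C 0 μ ν = 2 * E / 3 * (if μ = ν then 1 else 0))
    (hCx : ∀ x : EuclideanSpace ℝ (Fin 3), x ≠ 0 → ∀ μ ν : Fin 3,
      C x μ ν = 2 * E / 3 * f ‖x‖ * (if μ = ν then 1 else 0)
        + E / 3 * ‖x‖ * deriv f ‖x‖ * ((if μ = ν then 1 else 0) - x μ * x ν / ‖x‖ ^ 2))
    (r : ℝ) (hr : 0 < r) (lam : ℝ) (hlam : lam ≠ 0)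
    (v : EuclideanSpace ℝ (Fin 3) → EuclideanSpace ℝ (Fin 3))
    (hv : DifferentiableOn ℝ v (Metric.ball 0 r))
    (hvnz : ∃ x ∈ Metric.ball (0 : EuclideanSpace ℝ (Fin 3)) r, v x ≠ 0)
    (heq : ∀ x ∈ Metric.ball (0 : EuclideanSpace ℝ (Fin 3)) r, ∀ μ : Fin 3,
      2 * lam * v x μ
        = (∑ ν : Fin 3, C x μ ν * curl3 v 0 ν)
          - ∑ ν : Fin 3, v 0 ν * curl3 (cvec C μ) x ν) :
    (lam = Real.sqrt 5 * E / (3 * l) ∨ lam = -(Real.sqrt 5 * E / (3 * l))) ∧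
    curl3 v 0 = (3 * lam / E) • v 0 := by
  have hE0 : E ≠ 0 := ne_of_gt hE
  have hl0 : l ≠ 0 := ne_of_gt hl
  have hCeq : ∀ (x : E3') (μ ν : Fin 3), C x μ ν = Cfun E l f μ ν x := by
    intro x μ ν
    by_cases hx : x = 0
    · subst hx
      rw [hC0]
      simp [Cfun, Af, dd, hf0]
    · rw [hCx x hx μ ν]
      have hs : ‖x‖ ≠ 0 := norm_ne_zero_iff.2 hx
      simp only [Cfun, Af, kf, hs, if_false, dd]
      by_cases hμν : μ = ν <;> simp [hμν] <;> field_simp <;> ring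
  have hball0 : (0:E3') ∈ Metric.ball (0:E3') r := Metric.mem_ball_self hr
  have hfderiv0 : ∀ μ β : Fin 3, fderiv ℝ (fun y => C y μ β) 0 = 0 := by
    intro μ β
    have hfn : (fun y => C y μ β) = Cfun E l f μ β := funext (fun y => hCeq y μ β)
    rw [hfn]
    exact (Cfun_hasFDerivAt_zero E l hE f hf hfeven hf'' μ β).fderiv
  have hpd0 : ∀ μ σ β : Fin 3, pderiv3 (cvec C μ) σ β 0 = 0 := by
    intro μ σ β
    have hcv : (fun y => cvec C μ y β) = fun y => C y μ β := by
      funext y; simp [cvec]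
    unfold pderiv3
    rw [hcv, hfderiv0]
    simp
  have hcurl0 : ∀ μ ν : Fin 3, curl3 (cvec C μ) 0 ν = 0 := by
    intro μ ν
    fin_cases ν <;> simp [curl3, hpd0]
  have homega : ∀ μ : Fin 3, curl3 v 0 μ = 3 * lam / E * v 0 μ := by
    intro μ
    have h := heq 0 hball0 μ
    rw [Fin.sum_univ_three, Fin.sum_univ_three] at h
    rw [hcurl0 μ 0, hcurl0 μ 1, hcurl0 μ 2, hC0 μ 0, hC0 μ 1, hC0 μ 2] at h
    fin_cases μ <;>
    · simp at h ⊢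
      field_simp
      linarith
  have hconc2 : curl3 v 0 = (3 * lam / E) • v 0 := by
    ext μ
    rw [homega μ]
    simp
  have hv0ne : v 0 ≠ 0 := by
    intro h0
    obtain ⟨x, hx, hvx⟩ := hvnz
    apply hvx
    ext μ
    have h := heq x hx μ
    rw [Fin.sum_univ_three, Fin.sum_univ_three] at h
    rw [homega 0, homega 1, homega 2, h0] at h
    simp at h
    rcases h with h | h
    · exact absurd h hlam
    · simpa using h
  have hvd : DifferentiableAt ℝ v 0 := hv.differentiableAt (Metric.ball_mem_nhds 0 hr)
  have hQ : ∀ i : Fin 3, HasFDerivAt (fun y : E3' => ∑ ν : Fin 3, v 0 ν * curl3 (cvec C i) y ν)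
      (v 0 0 • (MM E l 1 i 2 - MM E l 2 i 1) + v 0 1 • (MM E l 2 i 0 - MM E l 0 i 2)
        + v 0 2 • (MM E l 0 i 1 - MM E l 1 i 0)) 0 := by
    intro i
    have hG := fun σ β => G_hasFDerivAt_zero E l hE f hf hfeven hf'' i β σ
    have hcv : ∀ β : Fin 3, (fun z : E3' => cvec C i z β) = Cfun E l f i β := by
      intro β; funext z; simp [cvec, hCeq]
    have hfun : (fun y : E3' => ∑ ν : Fin 3, v 0 ν * curl3 (cvec C i) y ν)
        = fun y => v 0 0 * (fderiv ℝ (Cfun E l f i 2) y (EuclideanSpace.single 1 1)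
              - fderiv ℝ (Cfun E l f i 1) y (EuclideanSpace.single 2 1))
          + v 0 1 * (fderiv ℝ (Cfun E l f i 0) y (EuclideanSpace.single 2 1)
              - fderiv ℝ (Cfun E l f i 2) y (EuclideanSpace.single 0 1))
          + v 0 2 * (fderiv ℝ (Cfun E l f i 1) y (EuclideanSpace.single 0 1)
              - fderiv ℝ (Cfun E l f i 0) y (EuclideanSpace.single 1 1)) := by
      funext y
      rw [Fin.sum_univ_three]
      simp [curl3, pderiv3, hcv]
    rw [hfun]
    have h1 := ((hG 1 2).sub (hG 2 1)).const_mul (v 0 0)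
    have h2 := ((hG 2 0).sub (hG 0 2)).const_mul (v 0 1)
    have h3 := ((hG 0 1).sub (hG 1 0)).const_mul (v 0 2)
    exact (h1.add h2).add h3
  have hR : ∀ i : Fin 3, HasFDerivAt
      (fun y : E3' => (∑ ν : Fin 3, C y i ν * curl3 v 0 ν) - 2 * lam * v y i)
      ((0 : E3' →L[ℝ] ℝ) - (2 * lam) • fderiv ℝ (fun y : E3' => v y i) 0) 0 := by
    intro i
    have hz : HasFDerivAt (fun y : E3' => ∑ ν : Fin 3, C y i ν * curl3 v 0 ν)
        (0 : E3' →L[ℝ] ℝ) 0 := by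
      have hfun : (fun y : E3' => ∑ ν : Fin 3, C y i ν * curl3 v 0 ν)
          = fun y => Cfun E l f i 0 y * curl3 v 0 0 + Cfun E l f i 1 y * curl3 v 0 1
            + Cfun E l f i 2 y * curl3 v 0 2 := by
        funext y
        rw [Fin.sum_univ_three, hCeq y i 0, hCeq y i 1, hCeq y i 2]
      rw [hfun]
      have hzz := fun β => Cfun_hasFDerivAt_zero E l hE f hf hfeven hf'' i β
      have h := (((hzz 0).mul_const (curl3 v 0 0)).add ((hzz 1).mul_const (curl3 v 0 1))).add
        ((hzz 2).mul_const (curl3 v 0 2))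
      exact h.congr_fderiv (by ext; simp)
    have hvdi : DifferentiableAt ℝ (fun y : E3' => v y i) 0 := by
      have hh : (fun y : E3' => v y i) = fun y => (EuclideanSpace.proj (𝕜 := ℝ) i) (v y) := rfl
      rw [hh]
      exact ((EuclideanSpace.proj (𝕜 := ℝ) i).differentiableAt).comp 0 hvd
    exact hz.sub (hvdi.hasFDerivAt.const_mul (2 * lam))
  have hN : ∀ i : Fin 3,
      (v 0 0 • (MM E l 1 i 2 - MM E l 2 i 1) + v 0 1 • (MM E l 2 i 0 - MM E l 0 i 2)
        + v 0 2 • (MM E l 0 i 1 - MM E l 1 i 0))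
      = (0 : E3' →L[ℝ] ℝ) - (2 * lam) • fderiv ℝ (fun y : E3' => v y i) 0 := by
    intro i
    have hP : (fun y : E3' => ∑ ν : Fin 3, v 0 ν * curl3 (cvec C i) y ν)
        =ᶠ[nhds (0:E3')] fun y => (∑ ν : Fin 3, C y i ν * curl3 v 0 ν) - 2 * lam * v y i := by
      filter_upwards [Metric.ball_mem_nhds (0:E3') hr] with y hy
      have h := heq y hy i
      linarith [h]
    exact (hQ i).unique ((hR i).congr_of_eventuallyEq hP)
  have hscal : ∀ i j : Fin 3,
      v 0 0 * (MM E l 1 i 2 (EuclideanSpace.single j 1) - MM E l 2 i 1 (EuclideanSpace.single j 1))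
      + v 0 1 * (MM E l 2 i 0 (EuclideanSpace.single j 1) - MM E l 0 i 2 (EuclideanSpace.single j 1))
      + v 0 2 * (MM E l 0 i 1 (EuclideanSpace.single j 1) - MM E l 1 i 0 (EuclideanSpace.single j 1))
      = -(2 * lam) * pderiv3 v j i 0 := by
    intro i j
    have h := congrArg (fun (L : E3' →L[ℝ] ℝ) => L (EuclideanSpace.single j 1)) (hN i)
    simpa [pderiv3] using h
  have hfin : ∀ τ : Fin 3, 2 * lam * curl3 v 0 τ = 10 * E / (3 * l^2) * v 0 τ := by
    intro τ
    fin_cases τ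
    · show 2 * lam * curl3 v 0 0 = 10 * E / (3 * l^2) * v 0 0
      have h1 := hscal 2 1
      have h2 := hscal 1 2
      have hc : curl3 v 0 0 = pderiv3 v 1 2 0 - pderiv3 v 2 1 0 := by simp [curl3]
      rw [hc]
      rw [MM_apply, MM_apply, MM_apply, MM_apply, MM_apply, MM_apply] at h1 h2
      norm_num [dd, Fin.ext_iff] at h1 h2
      linear_combination h1 - h2
    · show 2 * lam * curl3 v 0 1 = 10 * E / (3 * l^2) * v 0 1
      have h1 := hscal 0 2
      have h2 := hscal 2 0
      have hc : curl3 v 0 1 = pderiv3 v 2 0 0 - pderiv3 v 0 2 0 := by simp [curl3]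
      rw [hc]
      rw [MM_apply, MM_apply, MM_apply, MM_apply, MM_apply, MM_apply] at h1 h2
      norm_num [dd, Fin.ext_iff] at h1 h2
      linear_combination h1 - h2
    · show 2 * lam * curl3 v 0 2 = 10 * E / (3 * l^2) * v 0 2
      have h1 := hscal 1 0
      have h2 := hscal 0 1
      have hc : curl3 v 0 2 = pderiv3 v 0 1 0 - pderiv3 v 1 0 0 := by simp [curl3]
      rw [hc]
      rw [MM_apply, MM_apply, MM_apply, MM_apply, MM_apply, MM_apply] at h1 h2
      norm_num [dd, Fin.ext_iff] at h1 h2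
      linear_combination h1 - h2
  have hτ : ∃ τ, v 0 τ ≠ 0 := by
    by_contra h
    push_neg at h
    exact hv0ne (by ext i; simpa using h i)
  obtain ⟨τ0, hτ0⟩ := hτ
  have h1 := hfin τ0
  rw [homega τ0] at h1
  have hlam2 : lam^2 = 5 * E^2 / (9 * l^2) := by
    have h2 : (6 * lam^2 / E) * v 0 τ0 = (10 * E / (3 * l^2)) * v 0 τ0 := by
      field_simp at h1 ⊢
      linarith [h1]
    have h3 := mul_right_cancel₀ hτ0 h2
    field_simp at h3 ⊢
    linarith [h3]
  have ha2 : (Real.sqrt 5 * E / (3 * l))^2 = 5 * E^2 / (9 * l^2) := by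
    rw [div_pow, mul_pow, Real.sq_sqrt (by norm_num : (0:ℝ) ≤ 5)]
    ring_nf
  have hfac : (lam - Real.sqrt 5 * E / (3 * l)) * (lam + Real.sqrt 5 * E / (3 * l)) = 0 := by
    have hd : lam^2 - (Real.sqrt 5 * E / (3 * l))^2 = 0 := by rw [hlam2, ha2]; ring
    linear_combination hd
  rcases mul_eq_zero.mp hfac with h | h
  · exact ⟨Or.inl (by linarith), hconc2⟩
  · exact ⟨Or.inr (by linarith), hconc2⟩
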